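/- The separator encoding map is injective when restricted to sets of pairwise disjoint mentions: if M and M' are both sets of pairwise disjoint intervals over {1,…,n} and they have the same separator sequence, then M = M'. -/
import Mathlib


inductive Marker | S | E | C
deriving DecidableEq

/-- Separator sequence of a set of mentions (intervals). Gap `k` lies between word `k` and word `k+1`. -/
def sep (M : Set (ℕ × ℕ)) (k : ℕ) : Set Marker :=
  {m | (m = Marker.S ∧ ∃ p ∈ M, p.1 = k + 1) ∨
       (m = Marker.E ∧ ∃ p ∈ M, p.2 = k) ∨
       (m = Marker.C ∧ ∃ p ∈ M, p.1 ≤ k ∧ k + 1 ≤ p.2)}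

/-- `M` is a set of mentions over a sentence of `n` words. -/
def Valid (n : ℕ) (M : Set (ℕ × ℕ)) : Prop :=
  ∀ p ∈ M, 1 ≤ p.1 ∧ p.1 ≤ p.2 ∧ p.2 ≤ n

lemma subset_of_sep_eq (n : ℕ) (M M' : Set (ℕ × ℕ))
    (hM : Valid n M) (hM' : Valid n M')
    (hdisj' : ∀ p ∈ M', ∀ q ∈ M', p ≠ q → p.2 < q.1 ∨ q.2 < p.1)
    (h : sep M = sep M') : M ⊆ M' := by
  intro p hp
  obtain ⟨ha1, hab, hbn⟩ := hM p hp
  -- S marker at gap p.1 - 1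
  have hS : Marker.S ∈ sep M (p.1 - 1) := Or.inl ⟨rfl, p, hp, by omega⟩
  rw [h] at hS
  obtain ⟨q, hq, hq1⟩ : ∃ q ∈ M', q.1 = p.1 := by
    rcases hS with ⟨_, q, hq, hq1⟩ | ⟨h', _⟩ | ⟨h', _⟩
    · exact ⟨q, hq, by omega⟩
    · exact absurd h' (by decide)
    · exact absurd h' (by decide)
  obtain ⟨hq1', hqab, _⟩ := hM' q hq
  rcases lt_trichotomy q.2 p.2 with hlt | heq | hgt
  · -- q ends strictly before p: contradiction using C marker at gap q.2
    exfalso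
    have hC : Marker.C ∈ sep M q.2 := Or.inr (Or.inr ⟨rfl, p, hp, by omega, by omega⟩)
    rw [h] at hC
    obtain ⟨r, hr, hr1, hr2⟩ : ∃ r ∈ M', r.1 ≤ q.2 ∧ q.2 + 1 ≤ r.2 := by
      rcases hC with ⟨h', _⟩ | ⟨h', _⟩ | ⟨_, r, hr, hr1, hr2⟩
      · exact absurd h' (by decide)
      · exact absurd h' (by decide)
      · exact ⟨r, hr, hr1, hr2⟩
    have hne : r ≠ q := by intro e; rw [e] at hr2; omega
    rcases hdisj' r hr q hq hne with h1 | h1 <;> omega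
  · -- q.2 = p.2, so q = p
    have : q = p := Prod.ext hq1 heq
    rwa [this] at hq
  · -- q ends strictly after p: contradiction using E marker at gap p.2
    exfalso
    have hE : Marker.E ∈ sep M p.2 := Or.inr (Or.inl ⟨rfl, p, hp, rfl⟩)
    rw [h] at hE
    obtain ⟨r, hr, hr2⟩ : ∃ r ∈ M', r.2 = p.2 := by
      rcases hE with ⟨h', _⟩ | ⟨_, r, hr, hr2⟩ | ⟨h', _⟩
      · exact absurd h' (by decide)
      · exact ⟨r, hr, hr2⟩
      · exact absurd h' (by decide)
    obtain ⟨_, hrab, _⟩ := hM' r hr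
    have hne : r ≠ q := by intro e; rw [e] at hr2; omega
    rcases hdisj' r hr q hq hne with h1 | h1 <;> omega

theorem encoding_injective_on_disjoint (n : ℕ) (M M' : Set (ℕ × ℕ))
    (hM : Valid n M) (hM' : Valid n M')
    (hdisj : ∀ p ∈ M, ∀ q ∈ M, p ≠ q → p.2 < q.1 ∨ q.2 < p.1)
    (hdisj' : ∀ p ∈ M', ∀ q ∈ M', p ≠ q → p.2 < q.1 ∨ q.2 < p.1)
    (h : sep M = sep M') : M = M' := by
  exact Set.Subset.antisymm
    (subset_of_sep_eq n M M' hM hM' hdisj' h)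
    (subset_of_sep_eq n M' M hM' hM hdisj h.symm)
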